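/- Let G be a graph with nonempty disjoint vertex sets I and O such that both G[I ∪ O] and G - (I ∪ O) are edgeless, and I is nonempty. Then every minimal (I,O)-extension S satisfies |S| ≤ |I ∪ O|. -/

import Mathlib

/-- S is a connected dominating set of G. -/
def IsCDS {V : Type*} (G : SimpleGraph V) (S : Set V) : Prop :=
  (∀ v ∉ S, ∃ u ∈ S, G.Adj v u) ∧ (G.induce S).Connected

/-- S is an (I,O)-extension: S is disjoint from I ∪ O and I ∪ S is a connected
dominating set of G. -/
def IsExtension {V : Type*} (G : SimpleGraph V) (I O S : Set V) : Prop :=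
  Disjoint S (I ∪ O) ∧ IsCDS G (I ∪ S)

/-- S is a minimal (I,O)-extension: no proper subset of S is an (I,O)-extension. -/
def IsMinExtension {V : Type*} (G : SimpleGraph V) (I O S : Set V) : Prop :=
  IsExtension G I O S ∧ ∀ S' ⊂ S, ¬ IsExtension G I O S'

section Aux

open SimpleGraph

variable {V : Type*}

/-- Reachability within a vertex set `B`, via walks of `G` whose support lies in `B`. -/
def ReachIn (G : SimpleGraph V) (B : Set V) (x y : V) : Prop :=
  ∃ w : G.Walk x y, ∀ z ∈ w.support, z ∈ B

lemma reachIn_symm {G : SimpleGraph V} {B : Set V} {x y : V}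
    (h : ReachIn G B x y) : ReachIn G B y x := by
  obtain ⟨w, hw⟩ := h
  refine ⟨w.reverse, ?_⟩
  intro z hz
  rw [Walk.support_reverse, List.mem_reverse] at hz
  exact hw z hz

lemma reachIn_trans {G : SimpleGraph V} {B : Set V} {x y z : V}
    (h1 : ReachIn G B x y) (h2 : ReachIn G B y z) : ReachIn G B x z := by
  obtain ⟨w1, hw1⟩ := h1; obtain ⟨w2, hw2⟩ := h2
  refine ⟨w1.append w2, ?_⟩
  intro u hu
  rw [Walk.mem_support_append_iff] at hu
  rcases hu with h | h
  exacts [hw1 _ h, hw2 _ h]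

lemma connected_reachIn {G : SimpleGraph V} {B : Set V}
    (h : (G.induce B).Connected) {x y : V} (hx : x ∈ B) (hy : y ∈ B) :
    ReachIn G B x y := by
  obtain ⟨w⟩ := h.preconnected ⟨x, hx⟩ ⟨y, hy⟩
  refine ⟨w.map (SimpleGraph.Embedding.induce B).toHom, ?_⟩
  intro z hz
  erw [Walk.support_map, List.mem_map] at hz
  obtain ⟨⟨z', hz'⟩, _, rfl⟩ := hz
  exact hz'

lemma reachIn_reachable {G : SimpleGraph V} {B : Set V} :
    ∀ {x y : V} (w : G.Walk x y) (hw : ∀ z ∈ w.support, z ∈ B),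
      (G.induce B).Reachable ⟨x, hw x w.start_mem_support⟩ ⟨y, hw y w.end_mem_support⟩ := by
  intro x y w
  induction w with
  | nil => intro hw; rfl
  | @cons x b y hadj p ih =>
    intro hw
    have hp : ∀ z ∈ p.support, z ∈ B := by
      intro z hz
      exact hw z (by rw [Walk.support_cons]; exact List.mem_cons_of_mem _ hz)
    have hAdj : (G.induce B).Adj ⟨x, hw x (Walk.start_mem_support _)⟩
        ⟨b, hp b p.start_mem_support⟩ := hadj
    exact hAdj.reachable.trans (ih hp)

lemma not_connected_reachIn {G : SimpleGraph V} {B : Set V}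
    (hne : B.Nonempty) (h : ¬ (G.induce B).Connected) :
    ∃ x ∈ B, ∃ y ∈ B, ¬ ReachIn G B x y := by
  by_contra hc
  push_neg at hc
  apply h
  have : Nonempty ↥B := hne.to_subtype
  refine ⟨fun u v => ?_⟩
  obtain ⟨w, hw⟩ := hc u.1 u.2 v.1 v.2
  exact reachIn_reachable w hw

lemma walk_head_decomp {G : SimpleGraph V} {s z : V} (hne : s ≠ z) (q : G.Walk s z) :
    ∃ a, ∃ _ : G.Adj s a, ∃ q' : G.Walk a z, q.support = s :: q'.support := by
  cases q with
  | nil => exact absurd rfl hne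
  | cons h q' => exact ⟨_, h, q', rfl⟩

end Aux

/-- If I is nonempty, I and O are disjoint, G[I ∪ O] is edgeless and G - (I ∪ O) is
edgeless, then every minimal (I,O)-extension S satisfies |S| ≤ |I ∪ O|. -/
theorem minimal_extension_card_le {V : Type*} [Fintype V] (G : SimpleGraph V)
    (I O : Set V) (hIO : Disjoint I O) (hI : I.Nonempty)
    (hedgeless₁ : ∀ u ∈ I ∪ O, ∀ v ∈ I ∪ O, ¬ G.Adj u v)
    (hedgeless₂ : ∀ u ∉ I ∪ O, ∀ v ∉ I ∪ O, ¬ G.Adj u v)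
    (S : Set V) (hS : IsMinExtension G I O S) :
    S.ncard ≤ (I ∪ O).ncard := by
  classical
  open SimpleGraph in
  obtain ⟨⟨hdisj, hdom, hconn⟩, hmin⟩ := hS
  obtain ⟨i0, hi0⟩ := hI
  have hSA : ∀ s ∈ S, s ∉ I ∪ O := fun s hs hmem => Set.disjoint_left.mp hdisj hs hmem
  have hTmem : i0 ∈ I ∪ S := Or.inl hi0
  -- a neighbor of an `S`-vertex inside `I ∪ S` lies in `I`
  have hIneighbor : ∀ s ∈ S, ∀ a, G.Adj s a → a ∈ I ∪ S → a ∈ I := by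
    intro s hs a hadj haT
    by_cases haA : a ∈ I ∪ O
    · rcases haT with h | h
      · exact h
      · exact absurd haA (hSA a h)
    · exact absurd hadj (hedgeless₂ s (hSA s hs) a haA)
  -- every `s ∈ S` has a neighbor in `I`
  have hnbr : ∀ s ∈ S, ∃ a ∈ I, G.Adj s a := by
    intro s hs
    have hsT : s ∈ I ∪ S := Or.inr hs
    obtain ⟨w, hw⟩ := connected_reachIn hconn hsT hTmem
    have hne : s ≠ i0 := by
      rintro rfl
      exact hSA s hs (Or.inl hi0)
    obtain ⟨a, hadj, q', hsupp⟩ := walk_head_decomp hne w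
    have haT : a ∈ I ∪ S := hw a (by rw [hsupp]; exact List.mem_cons_of_mem _ q'.start_mem_support)
    exact ⟨a, hIneighbor s hs a hadj haT, hadj⟩
  -- the key dichotomy from minimality
  have key : ∀ s ∈ S, (∃ v ∈ O, G.Adj v s ∧ ∀ s' ∈ S, G.Adj v s' → s' = s)
      ∨ (∃ a ∈ I, G.Adj s a ∧ ¬ ReachIn G ((I ∪ S) \ {s}) i0 a) := by
    intro s hs
    have hsnI : s ∉ I := fun h => hSA s hs (Or.inl h)
    have hsub : S \ {s} ⊂ S := Set.sdiff_singleton_ssubset.mpr hs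
    have hnotext := hmin _ hsub
    have hIS' : I ∪ (S \ {s}) = (I ∪ S) \ {s} := by
      rw [Set.union_diff_distrib, Set.diff_singleton_eq_self hsnI]
    have hdisj' : Disjoint (S \ {s}) (I ∪ O) := hdisj.mono_left Set.diff_subset
    have hnCDS : ¬ IsCDS G (I ∪ (S \ {s})) := fun h => hnotext ⟨hdisj', h⟩
    by_cases hdom' : ∀ v ∉ I ∪ (S \ {s}), ∃ u ∈ I ∪ (S \ {s}), G.Adj v u
    · -- connectivity fails
      right
      have hconn' : ¬ (G.induce (I ∪ (S \ {s}))).Connected := fun h => hnCDS ⟨hdom', h⟩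
      rw [hIS'] at hconn'
      have hi0B : i0 ∈ (I ∪ S) \ {s} :=
        ⟨Or.inl hi0, fun h => hsnI (Set.mem_singleton_iff.mp h ▸ hi0)⟩
      obtain ⟨x, hx, y, hy, hxy⟩ := not_connected_reachIn ⟨i0, hi0B⟩ hconn'
      obtain ⟨z, hzB, hz⟩ : ∃ z ∈ (I ∪ S) \ {s}, ¬ ReachIn G ((I ∪ S) \ {s}) i0 z := by
        by_cases hcx : ReachIn G ((I ∪ S) \ {s}) i0 x
        · refine ⟨y, hy, fun hcy => hxy (reachIn_trans (reachIn_symm hcx) hcy)⟩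
        · exact ⟨x, hx, hcx⟩
      obtain ⟨w0, hw0⟩ := connected_reachIn hconn hTmem (Set.mem_of_mem_diff hzB)
      have hps : ∀ u ∈ w0.bypass.support, u ∈ I ∪ S :=
        fun u hu => hw0 u (w0.support_bypass_subset hu)
      have hsp : s ∈ w0.bypass.support := by
        by_contra hsp
        exact hz ⟨w0.bypass, fun u hu =>
          ⟨hps u hu, fun he => hsp (Set.mem_singleton_iff.mp he ▸ hu)⟩⟩
      have hnodup := w0.bypass_isPath.support_nodup
      have hsplit : w0.bypass.support =
          (w0.bypass.takeUntil s hsp).support ++ (w0.bypass.dropUntil s hsp).support.tail := by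
        conv_lhs => rw [← Walk.take_spec w0.bypass hsp]
        rw [Walk.support_append]
      have htail : s ∉ (w0.bypass.dropUntil s hsp).support.tail := by
        intro hst
        rw [hsplit] at hnodup
        exact (List.disjoint_of_nodup_append hnodup) (Walk.end_mem_support _) hst
      have hsz : s ≠ z := fun h => hzB.2 (h ▸ rfl)
      obtain ⟨a, hadj, q', hq'⟩ := walk_head_decomp hsz (w0.bypass.dropUntil s hsp)
      have hq'tail : q'.support = (w0.bypass.dropUntil s hsp).support.tail := by
        rw [hq']
        rfl
      have hq'T : ∀ u ∈ q'.support, u ∈ I ∪ S := by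
        intro u hu
        have : u ∈ (w0.bypass.dropUntil s hsp).support := by
          rw [hq']; exact List.mem_cons_of_mem _ hu
        exact hps u (Walk.support_dropUntil_subset _ hsp this)
      have haI : a ∈ I := hIneighbor s hs a hadj (hq'T a q'.start_mem_support)
      refine ⟨a, haI, hadj, fun hra => hz (reachIn_trans hra ⟨q', ?_⟩)⟩
      intro u hu
      refine ⟨hq'T u hu, fun he => ?_⟩
      rw [Set.mem_singleton_iff] at he
      subst he
      exact htail (hq'tail ▸ hu)
    · -- domination fails
      left
      push_neg at hdom'
      obtain ⟨v, hv, hvadj⟩ := hdom'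
      by_cases hvs : v = s
      · subst hvs
        obtain ⟨a, haI, hadj⟩ := hnbr v hs
        exact absurd hadj (hvadj a (Or.inl haI))
      · have hvT : v ∉ I ∪ S := by
          rintro (h | h)
          · exact hv (Or.inl h)
          · exact hv (Or.inr ⟨h, hvs⟩)
        obtain ⟨u, huT, hadj⟩ := hdom v hvT
        have hus : u = s := by
          by_contra hus
          refine hvadj u ?_ hadj
          rcases huT with h | h
          · exact Or.inl h
          · exact Or.inr ⟨h, hus⟩
        subst hus
        have hvA : v ∈ I ∪ O := by
          by_contra hvA
          exact hedgeless₂ v hvA u (hSA u hs) hadj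
        have hvO : v ∈ O := by
          rcases hvA with h | h
          · exact absurd (Or.inl h) hvT
          · exact h
        refine ⟨v, hvO, hadj, fun s' hs' hadj' => ?_⟩
        by_contra hne
        exact hvadj s' (Or.inr ⟨hs', hne⟩) hadj'
  -- injectivity of the "cut-vertex" map
  have inj2 : ∀ a, ∀ s1 ∈ S, ∀ s2 ∈ S,
      G.Adj s1 a → G.Adj s2 a → a ∈ I →
      ¬ ReachIn G ((I ∪ S) \ {s1}) i0 a → ¬ ReachIn G ((I ∪ S) \ {s2}) i0 a → s1 = s2 := by
    intro a s1 hs1 s2 hs2 h1 h2 haI hn1 hn2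
    by_contra hne
    obtain ⟨w, hw⟩ := connected_reachIn hconn hTmem (Or.inl haI)
    have has1 : a ≠ s1 := fun h => hSA s1 hs1 (Or.inl (h ▸ haI))
    have has2 : a ≠ s2 := fun h => hSA s2 hs2 (Or.inl (h ▸ haI))
    have hmem1 : s1 ∈ w.support := by
      by_contra h
      exact hn1 ⟨w, fun u hu => ⟨hw u hu, fun he => h (Set.mem_singleton_iff.mp he ▸ hu)⟩⟩
    have hmem2 : s2 ∈ w.support := by
      by_contra h
      exact hn2 ⟨w, fun u hu => ⟨hw u hu, fun he => h (Set.mem_singleton_iff.mp he ▸ hu)⟩⟩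
    by_cases hc : s2 ∈ (w.takeUntil s1 hmem1).support
    · -- use the prefix up to s2, then jump to a; this avoids s1
      have hcnt : (w.takeUntil s1 hmem1).support.count s1 = 1 :=
        Walk.count_support_takeUntil_eq_one _ _
      have hsplit : (w.takeUntil s1 hmem1).support =
          ((w.takeUntil s1 hmem1).takeUntil s2 hc).support ++
            ((w.takeUntil s1 hmem1).dropUntil s2 hc).support.tail := by
        conv_lhs => rw [← Walk.take_spec (w.takeUntil s1 hmem1) hc]
        rw [Walk.support_append]
      have hs1drop : s1 ∈ ((w.takeUntil s1 hmem1).dropUntil s2 hc).support.tail := by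
        have hend : s1 ∈ ((w.takeUntil s1 hmem1).dropUntil s2 hc).support :=
          Walk.end_mem_support _
        rw [Walk.support_eq_cons] at hend
        rcases List.mem_cons.mp hend with h | h
        · exact absurd h hne
        · exact h
      have hns1 : s1 ∉ ((w.takeUntil s1 hmem1).takeUntil s2 hc).support := by
        intro hmem
        have h2le : 2 ≤ (w.takeUntil s1 hmem1).support.count s1 := by
          rw [hsplit, List.count_append]
          have c1 : 0 < ((w.takeUntil s1 hmem1).takeUntil s2 hc).support.count s1 :=
            List.count_pos_iff.mpr hmem
          have c2 : 0 < ((w.takeUntil s1 hmem1).dropUntil s2 hc).support.tail.count s1 :=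
            List.count_pos_iff.mpr hs1drop
          omega
        omega
      refine hn1 ⟨((w.takeUntil s1 hmem1).takeUntil s2 hc).concat h2, ?_⟩
      intro u hu
      rw [Walk.support_concat, List.mem_append] at hu
      rcases hu with hu | hu
      · have huT : u ∈ I ∪ S := hw u
          (Walk.support_takeUntil_subset _ hmem1
            (Walk.support_takeUntil_subset _ hc hu))
        exact ⟨huT, fun he => hns1 (Set.mem_singleton_iff.mp he ▸ hu)⟩
      · rw [List.mem_singleton] at hu
        subst hu
        exact ⟨Or.inl haI, fun he => has1 (Set.mem_singleton_iff.mp he)⟩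
    · -- the prefix up to s1, then jump to a; this avoids s2
      refine hn2 ⟨(w.takeUntil s1 hmem1).concat h1, ?_⟩
      intro u hu
      rw [Walk.support_concat, List.mem_append] at hu
      rcases hu with hu | hu
      · have huT : u ∈ I ∪ S := hw u (Walk.support_takeUntil_subset _ hmem1 hu)
        exact ⟨huT, fun he => hc (Set.mem_singleton_iff.mp he ▸ hu)⟩
      · rw [List.mem_singleton] at hu
        subst hu
        exact ⟨Or.inl haI, fun he => has2 (Set.mem_singleton_iff.mp he)⟩
  -- assemble the injection into I ∪ O
  have key3 : ∀ s, ∃ t, s ∈ S → ((t ∈ O ∧ G.Adj t s ∧ ∀ s' ∈ S, G.Adj t s' → s' = s)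
      ∨ (t ∈ I ∧ G.Adj s t ∧ ¬ ReachIn G ((I ∪ S) \ {s}) i0 t)) := by
    intro s
    by_cases hs : s ∈ S
    · rcases key s hs with ⟨v, hv, h1, h2⟩ | ⟨a, ha, h1, h2⟩
      · exact ⟨v, fun _ => Or.inl ⟨hv, h1, h2⟩⟩
      · exact ⟨a, fun _ => Or.inr ⟨ha, h1, h2⟩⟩
    · exact ⟨i0, fun h => absurd h hs⟩
  choose f hf using key3
  have hmaps : ∀ s ∈ S, f s ∈ I ∪ O := by
    intro s hs
    rcases hf s hs with ⟨h, _, _⟩ | ⟨h, _, _⟩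
    exacts [Or.inr h, Or.inl h]
  have hinj : Set.InjOn f S := by
    intro s1 hs1 s2 hs2 heq
    rcases hf s1 hs1 with ⟨hO1, ha1, hu1⟩ | ⟨hI1, ha1, hn1⟩ <;>
      rcases hf s2 hs2 with ⟨hO2, ha2, hu2⟩ | ⟨hI2, ha2, hn2⟩
    · exact (hu1 s2 hs2 (heq ▸ ha2)).symm
    · exact absurd (heq ▸ hI2) fun h => Set.disjoint_left.mp hIO h hO1
    · exact absurd (heq ▸ hO2) fun h => Set.disjoint_left.mp hIO hI1 h
    · exact inj2 (f s1) s1 hs1 s2 hs2 ha1 (heq ▸ ha2) hI1 hn1 (heq ▸ hn2)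
  exact Set.ncard_le_ncard_of_injOn f hmaps hinj (Set.toFinite _)
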